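/- (Thermal area law, finite-dimensional form.) On ℂ^m ⊗ ℂ^n, let H_AB = H_A ⊗ 1 + H_∂ + 1 ⊗ H_B with H_A, H_B, H_∂ Hermitian, let β > 0, and let ρ = e^{−βH_AB}/Tr(e^{−βH_AB}) be the Gibbs state with reduced density matrices ρ_A and ρ_B. Then I_ρ(A:B) ≤ β · Tr(H_∂ (ρ_A ⊗ ρ_B − ρ)) ≤ 2β‖H_∂‖, where ‖·‖ is the operator norm. -/

import Mathlib

open scoped Kronecker ComplexOrder
open Matrix

noncomputable section

namespace TAL

/-- A density matrix: positive semidefinite with trace `1`. -/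
def IsDensityMatrix {k : Type*} [Fintype k] [DecidableEq k] (D : Matrix k k ℂ) : Prop :=
  D.PosSemidef ∧ D.trace = 1

/-- Functional calculus for Hermitian matrices via the spectral decomposition
(junk value `0` on non-Hermitian matrices). -/
def hermCalc {k : Type*} [Fintype k] [DecidableEq k] (f : ℝ → ℝ) (A : Matrix k k ℂ) :
    Matrix k k ℂ :=
  if hA : A.IsHermitian then
    (hA.eigenvectorUnitary : Matrix k k ℂ) *
      Matrix.diagonal (fun i => (f (hA.eigenvalues i) : ℂ)) *
        star (hA.eigenvectorUnitary : Matrix k k ℂ)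
  else 0

/-- Matrix logarithm via the spectral decomposition. -/
def matLog {k : Type*} [Fintype k] [DecidableEq k] (A : Matrix k k ℂ) : Matrix k k ℂ :=
  hermCalc Real.log A

/-- The von Neumann entropy `S(D) = -Tr (D log D)`, computed through the eigenvalues,
with the convention `0 * log 0 = 0` (junk value `0` on non-Hermitian matrices). -/
def vnEntropy {k : Type*} [Fintype k] [DecidableEq k] (A : Matrix k k ℂ) : ℝ :=
  if hA : A.IsHermitian then ∑ i, Real.negMulLog (hA.eigenvalues i) else 0

/-- The Umegaki relative entropy `S(D | E) = Tr (D (log D - log E))`. -/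
def relEntropy {k : Type*} [Fintype k] [DecidableEq k] (D E : Matrix k k ℂ) : ℝ :=
  ((D * (matLog D - matLog E)).trace).re

/-- Partial trace over the second (right) tensor factor. -/
def ptraceR {k₁ k₂ : Type*} [Fintype k₂] (D : Matrix (k₁ × k₂) (k₁ × k₂) ℂ) :
    Matrix k₁ k₁ ℂ :=
  Matrix.of fun i j => ∑ s : k₂, D (i, s) (j, s)

/-- Partial trace over the first (left) tensor factor. -/
def ptraceL {k₁ k₂ : Type*} [Fintype k₁] (D : Matrix (k₁ × k₂) (k₁ × k₂) ℂ) :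
    Matrix k₂ k₂ ℂ :=
  Matrix.of fun i j => ∑ s : k₁, D (s, i) (s, j)

/-- The mutual entropy `I_D(A:B) = S(D_A) + S(D_B) - S(D)`. -/
def mutualEntropy {k₁ k₂ : Type*} [Fintype k₁] [Fintype k₂] [DecidableEq k₁] [DecidableEq k₂]
    (D : Matrix (k₁ × k₂) (k₁ × k₂) ℂ) : ℝ :=
  vnEntropy (ptraceR D) + vnEntropy (ptraceL D) - vnEntropy D

/-- The Gibbs density matrix `e^{-β H} / Tr(e^{-β H})`. -/
def gibbs {k : Type*} [Fintype k] [DecidableEq k] (β : ℝ) (H : Matrix k k ℂ) :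
    Matrix k k ℂ :=
  (NormedSpace.exp ((-(β : ℂ)) • H)).trace⁻¹ • NormedSpace.exp ((-(β : ℂ)) • H)

/-- The free energy functional `F(D) = Tr(H D) - β⁻¹ S(D)` (real part of the trace). -/
def freeEnergy {k : Type*} [Fintype k] [DecidableEq k] (β : ℝ) (H D : Matrix k k ℂ) : ℝ :=
  ((H * D).trace).re - β⁻¹ * vnEntropy D

/-- The ℓ²-operator norm of a matrix. -/
def opNorm {k : Type*} [Fintype k] [DecidableEq k] (A : Matrix k k ℂ) : ℝ :=
  ‖(Matrix.toEuclideanCLM (𝕜 := ℂ) A : EuclideanSpace ℂ k →L[ℂ] EuclideanSpace ℂ k)‖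

/-- The trace norm `‖X‖₁ = Tr ((X* X)^{1/2})`. -/
def traceNorm {k : Type*} [Fintype k] [DecidableEq k] (X : Matrix k k ℂ) : ℝ :=
  (((Matrix.isHermitian_conjTranspose_mul_self X).eigenvectorUnitary : Matrix k k ℂ) *
      Matrix.diagonal (fun i =>
        ((Real.sqrt ((Matrix.isHermitian_conjTranspose_mul_self X).eigenvalues i) : ℝ) : ℂ)) *
      star ((Matrix.isHermitian_conjTranspose_mul_self X).eigenvectorUnitary : Matrix k k ℂ)).trace.re


/-- The perturbed density matrix `D^h = e^{log D + h} / Tr(e^{log D + h})`. -/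
def pert {k : Type*} [Fintype k] [DecidableEq k] (D h : Matrix k k ℂ) : Matrix k k ℂ :=
  (NormedSpace.exp (matLog D + h)).trace⁻¹ • NormedSpace.exp (matLog D + h)

section Helpers
variable {k : Type*} [Fintype k] [DecidableEq k]

lemma u_star_mul {V : Matrix k k ℂ} (hV : V ∈ Matrix.unitaryGroup k ℂ) :
    star V * V = 1 := Matrix.mem_unitaryGroup_iff'.mp hV

lemma u_mul_star {V : Matrix k k ℂ} (hV : V ∈ Matrix.unitaryGroup k ℂ) :
    V * star V = 1 := Matrix.mem_unitaryGroup_iff.mp hV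

lemma spectral_coe {A : Matrix k k ℂ} (hA : A.IsHermitian) :
    A = (hA.eigenvectorUnitary : Matrix k k ℂ) *
      Matrix.diagonal (fun i => (hA.eigenvalues i : ℂ)) *
        star (hA.eigenvectorUnitary : Matrix k k ℂ) := by
  convert hA.spectral_theorem using 3
  simp [Unitary.conjStarAlgAut_apply, Function.comp_def]

lemma eigUnitary_mem {A : Matrix k k ℂ} (hA : A.IsHermitian) :
    (hA.eigenvectorUnitary : Matrix k k ℂ) ∈ Matrix.unitaryGroup k ℂ :=
  (hA.eigenvectorUnitary).2

lemma conj_diag_fun_congr (f : ℝ → ℝ) {U V : Matrix k k ℂ}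
    (hU : U ∈ Matrix.unitaryGroup k ℂ) (hV : V ∈ Matrix.unitaryGroup k ℂ)
    {c d : k → ℝ}
    (h : V * Matrix.diagonal (fun i => (c i : ℂ)) * star V
       = U * Matrix.diagonal (fun i => (d i : ℂ)) * star U) :
    V * Matrix.diagonal (fun i => (f (c i) : ℂ)) * star V
       = U * Matrix.diagonal (fun i => (f (d i) : ℂ)) * star U := by
  set W := star U * V with hW
  have key : W * Matrix.diagonal (fun i => (c i : ℂ))
      = Matrix.diagonal (fun i => (d i : ℂ)) * W := by
    have h1 := congrArg (fun M => star U * M * V) h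
    simp only [Matrix.mul_assoc] at h1
    rw [u_star_mul hV, Matrix.mul_one] at h1
    rw [← Matrix.mul_assoc (star U) U, u_star_mul hU, Matrix.one_mul] at h1
    rw [hW, Matrix.mul_assoc]
    exact h1
  have ent : ∀ i j, W i j * (c j : ℂ) = (d i : ℂ) * W i j := by
    intro i j
    have := Matrix.ext_iff.mpr key i j
    rwa [Matrix.mul_diagonal, Matrix.diagonal_mul] at this
  have ent2 : ∀ i j, W i j * (f (c j) : ℂ) = (f (d i) : ℂ) * W i j := by
    intro i j
    rcases eq_or_ne (W i j) 0 with h0 | h0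
    · simp [h0]
    · have hcd : c j = d i := by
        have h2 := ent i j
        rw [mul_comm (W i j) _] at h2
        exact_mod_cast mul_right_cancel₀ h0 h2
      rw [hcd, mul_comm]
  have key2 : W * Matrix.diagonal (fun i => (f (c i) : ℂ))
      = Matrix.diagonal (fun i => (f (d i) : ℂ)) * W := by
    ext i j
    rw [Matrix.mul_diagonal, Matrix.diagonal_mul]
    exact ent2 i j
  have h2 := congrArg (fun M => U * M * star V) key2
  simp only [hW, Matrix.mul_assoc] at h2 ⊢
  rw [← Matrix.mul_assoc U (star U), u_mul_star hU, Matrix.one_mul,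
    u_mul_star hV, Matrix.mul_one] at h2
  exact h2

lemma hermCalc_spectral (f : ℝ → ℝ) {A : Matrix k k ℂ} (hA : A.IsHermitian)
    {V : Matrix k k ℂ} (hV : V ∈ Matrix.unitaryGroup k ℂ) {c : k → ℝ}
    (h : A = V * Matrix.diagonal (fun i => (c i : ℂ)) * star V) :
    hermCalc f A = V * Matrix.diagonal (fun i => (f (c i) : ℂ)) * star V := by
  rw [hermCalc, dif_pos hA]
  exact (conj_diag_fun_congr f (eigUnitary_mem hA) hV (h.symm.trans (spectral_coe hA))).symm

lemma eig_pos_of_spectral {A : Matrix k k ℂ} (hA : A.IsHermitian)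
    {V : Matrix k k ℂ} (hV : V ∈ Matrix.unitaryGroup k ℂ) {c : k → ℝ}
    (h : A = V * Matrix.diagonal (fun i => (c i : ℂ)) * star V)
    (hc : ∀ j, 0 < c j) : ∀ i, 0 < hA.eigenvalues i := by
  intro i
  set U := (hA.eigenvectorUnitary : Matrix k k ℂ) with hUdef
  have hU := eigUnitary_mem hA
  have h' : V * Matrix.diagonal (fun i => (c i : ℂ)) * star V
      = U * Matrix.diagonal (fun i => (hA.eigenvalues i : ℂ)) * star U :=
    h.symm.trans (spectral_coe hA)
  set W := star U * V with hW
  have key : W * Matrix.diagonal (fun i => (c i : ℂ))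
      = Matrix.diagonal (fun i => (hA.eigenvalues i : ℂ)) * W := by
    have h1 := congrArg (fun M => star U * M * V) h'
    simp only [Matrix.mul_assoc] at h1
    rw [u_star_mul hV, Matrix.mul_one] at h1
    rw [← Matrix.mul_assoc (star U) U, u_star_mul hU, Matrix.one_mul] at h1
    rw [hW, Matrix.mul_assoc]
    exact h1
  have hWu : W ∈ Matrix.unitaryGroup k ℂ := by
    rw [Matrix.mem_unitaryGroup_iff']
    rw [hW]
    calc star (star U * V) * (star U * V) = star V * (U * star U) * V := by
          simp [Matrix.mul_assoc]
    _ = 1 := by rw [u_mul_star hU, Matrix.mul_one, u_star_mul hV]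
  have hrow : ∃ j, W i j ≠ 0 := by
    by_contra hno
    push_neg at hno
    have : (W * star W) i i = 0 := by
      rw [Matrix.mul_apply]
      exact Finset.sum_eq_zero fun j _ => by rw [hno j, zero_mul]
    rw [u_mul_star hWu] at this
    simp at this
  obtain ⟨j, hj⟩ := hrow
  have := Matrix.ext_iff.mpr key i j
  rw [Matrix.mul_diagonal, Matrix.diagonal_mul] at this
  rw [mul_comm (W i j) _] at this
  have hceq : c j = hA.eigenvalues i := by exact_mod_cast mul_right_cancel₀ hj this
  rw [← hceq]; exact hc j

lemma trace_unitary_conj {V : Matrix k k ℂ} (hV : V ∈ Matrix.unitaryGroup k ℂ)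
    (M : Matrix k k ℂ) : (V * M * star V).trace = M.trace := by
  rw [Matrix.trace_mul_cycle, u_star_mul hV, Matrix.one_mul]

lemma trace_conj_diag {V : Matrix k k ℂ} (hV : V ∈ Matrix.unitaryGroup k ℂ)
    (v : k → ℂ) : (V * Matrix.diagonal v * star V).trace = ∑ i, v i := by
  rw [trace_unitary_conj hV, Matrix.trace_diagonal]

lemma mul_conj_diag {V : Matrix k k ℂ} (hV : V ∈ Matrix.unitaryGroup k ℂ)
    (a b : k → ℂ) :
    (V * Matrix.diagonal a * star V) * (V * Matrix.diagonal b * star V)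
      = V * Matrix.diagonal (fun i => a i * b i) * star V := by
  have h : star V * (V * (Matrix.diagonal b * star V)) = Matrix.diagonal b * star V := by
    rw [← Matrix.mul_assoc (star V) V, u_star_mul hV, Matrix.one_mul]
  calc (V * Matrix.diagonal a * star V) * (V * Matrix.diagonal b * star V)
      = V * (Matrix.diagonal a * (Matrix.diagonal b * star V)) := by
        simp only [Matrix.mul_assoc, h]
    _ = V * Matrix.diagonal (fun i => a i * b i) * star V := by
        rw [← Matrix.mul_assoc (Matrix.diagonal a), Matrix.diagonal_mul_diagonal,
          ← Matrix.mul_assoc]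

lemma trace_conj_diag_mul {V : Matrix k k ℂ} (hV : V ∈ Matrix.unitaryGroup k ℂ)
    (a b : k → ℂ) :
    ((V * Matrix.diagonal a * star V) * (V * Matrix.diagonal b * star V)).trace
      = ∑ i, a i * b i := by
  rw [mul_conj_diag hV, trace_conj_diag hV]

lemma matLog_spectral {A : Matrix k k ℂ} (hA : A.IsHermitian) :
    matLog A = (hA.eigenvectorUnitary : Matrix k k ℂ) *
      Matrix.diagonal (fun i => (Real.log (hA.eigenvalues i) : ℂ)) *
        star (hA.eigenvectorUnitary : Matrix k k ℂ) := by
  rw [matLog, hermCalc, dif_pos hA]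

lemma trace_mul_matLog_self {A : Matrix k k ℂ} (hA : A.IsHermitian) :
    ((A * matLog A).trace)
      = ((∑ i, hA.eigenvalues i * Real.log (hA.eigenvalues i) : ℝ) : ℂ) := by
  have h1 : ((hA.eigenvectorUnitary : Matrix k k ℂ) *
      Matrix.diagonal (fun i => (hA.eigenvalues i : ℂ)) *
        star (hA.eigenvectorUnitary : Matrix k k ℂ)) *
      ((hA.eigenvectorUnitary : Matrix k k ℂ) *
      Matrix.diagonal (fun i => (Real.log (hA.eigenvalues i) : ℂ)) *
        star (hA.eigenvectorUnitary : Matrix k k ℂ)) = A * matLog A := by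
    rw [← spectral_coe hA, ← matLog_spectral hA]
  rw [← h1, trace_conj_diag_mul (eigUnitary_mem hA)]
  push_cast
  rfl

lemma vnEntropy_eq_neg_trace {A : Matrix k k ℂ} (hA : A.IsHermitian) :
    vnEntropy A = -((A * matLog A).trace).re := by
  rw [vnEntropy, dif_pos hA, trace_mul_matLog_self hA, Complex.ofReal_re]
  rw [← Finset.sum_neg_distrib]
  exact Finset.sum_congr rfl fun i _ => by rw [Real.negMulLog]; ring

lemma sum_eig_eq_one {A : Matrix k k ℂ} (hA : A.IsHermitian) (h1 : A.trace = 1) :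
    ∑ i, hA.eigenvalues i = 1 := by
  have h2 := h1
  rw [spectral_coe hA, trace_conj_diag (eigUnitary_mem hA)] at h2
  exact_mod_cast h2

lemma scalar_klein {x y : ℝ} (hx : 0 ≤ x) (hy : 0 < y) :
    x - y ≤ x * Real.log x - x * Real.log y := by
  rcases eq_or_lt_of_le hx with h0 | h0
  · simp [← h0]; linarith
  · have hlog := Real.log_le_sub_one_of_pos (div_pos hy h0)
    rw [Real.log_div hy.ne' h0.ne'] at hlog
    have h2 := mul_le_mul_of_nonneg_left hlog (le_of_lt h0)
    have h3 : x * (y / x - 1) = y - x := by field_simp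
    rw [h3, mul_sub] at h2
    linarith

lemma conj_diag_apply_diag {W : Matrix k k ℂ} (a : k → ℂ) (j : k) :
    (W * Matrix.diagonal a * star W) j j = ∑ i, W j i * a i * star (W j i) := by
  rw [Matrix.mul_apply]
  refine Finset.sum_congr rfl fun i _ => ?_
  rw [Matrix.mul_diagonal, Matrix.star_apply]

lemma trace_conj_diag_mul_conj_diag {U V : Matrix k k ℂ}
    (hU : U ∈ Matrix.unitaryGroup k ℂ) (hV : V ∈ Matrix.unitaryGroup k ℂ)
    (a b : k → ℂ) :
    ((U * Matrix.diagonal a * star U) * (V * Matrix.diagonal b * star V)).trace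
      = ∑ j, ∑ i, a i * b j *
          ((star V * U) j i * star ((star V * U) j i)) := by
  have hsw : star (star V * U) = star U * V := by simp [Matrix.star_mul]
  have step1 : ((U * Matrix.diagonal a * star U) * (V * Matrix.diagonal b * star V)).trace
      = (((star V * U) * Matrix.diagonal a * star (star V * U)) * Matrix.diagonal b).trace := by
    rw [hsw]
    have e1 : ((star V * U) * Matrix.diagonal a * (star U * V)) * Matrix.diagonal b
        = star V * ((U * Matrix.diagonal a * star U) * (V * Matrix.diagonal b)) := by
      simp only [Matrix.mul_assoc]
    rw [e1, Matrix.trace_mul_comm (star V)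
      ((U * Matrix.diagonal a * star U) * (V * Matrix.diagonal b))]
    simp only [Matrix.mul_assoc]
  rw [step1]
  have step2 : (((star V * U) * Matrix.diagonal a * star (star V * U)) * Matrix.diagonal b).trace
      = ∑ j, ((star V * U) * Matrix.diagonal a * star (star V * U)) j j * b j := by
    simp [Matrix.trace, Matrix.diag, Matrix.mul_diagonal]
  rw [step2]
  refine Finset.sum_congr rfl fun j _ => ?_
  rw [conj_diag_apply_diag]
  rw [Finset.sum_mul]
  refine Finset.sum_congr rfl fun i _ => by ring

lemma row_normSq_sum_one {W : Matrix k k ℂ} (hW : W ∈ Matrix.unitaryGroup k ℂ) (j : k) :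
    ∑ i, Complex.normSq (W j i) = 1 := by
  have h1 : (W * star W) j j = 1 := by rw [u_mul_star hW]; simp
  rw [Matrix.mul_apply] at h1
  have h2 := congrArg Complex.re h1
  rw [Complex.re_sum] at h2
  simp only [Matrix.star_apply] at h2
  calc ∑ i, Complex.normSq (W j i)
      = ∑ i, (W j i * star (W j i)).re := by
        refine Finset.sum_congr rfl fun i _ => ?_
        rw [show star (W j i) = (starRingEnd ℂ) (W j i) from rfl, Complex.mul_conj]
        simp
    _ = 1 := by rw [h2]; simp
  
lemma col_normSq_sum_one {W : Matrix k k ℂ} (hW : W ∈ Matrix.unitaryGroup k ℂ) (i : k) :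
    ∑ j, Complex.normSq (W j i) = 1 := by
  have h1 : (star W * W) i i = 1 := by rw [u_star_mul hW]; simp
  rw [Matrix.mul_apply] at h1
  have h2 := congrArg Complex.re h1
  rw [Complex.re_sum] at h2
  simp only [Matrix.star_apply] at h2
  calc ∑ j, Complex.normSq (W j i)
      = ∑ j, (star (W j i) * W j i).re := by
        refine Finset.sum_congr rfl fun j _ => ?_
        rw [show star (W j i) = (starRingEnd ℂ) (W j i) from rfl, mul_comm,
          Complex.mul_conj]
        simp
    _ = 1 := by rw [h2]; simp

lemma klein {D E : Matrix k k ℂ} (hD : D.PosSemidef) (hE : E.IsHermitian)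
    (hq : ∀ i, 0 < hE.eigenvalues i) (hTD : D.trace = 1) (hTE : E.trace = 1) :
    0 ≤ relEntropy D E := by
  have hDh : D.IsHermitian := hD.1
  have hU := eigUnitary_mem hDh
  have hV := eigUnitary_mem hE
  have hWu : (star (hE.eigenvectorUnitary : Matrix k k ℂ) *
      (hDh.eigenvectorUnitary : Matrix k k ℂ)) ∈ Matrix.unitaryGroup k ℂ := by
    rw [Matrix.mem_unitaryGroup_iff']
    calc star (star (hE.eigenvectorUnitary : Matrix k k ℂ) *
          (hDh.eigenvectorUnitary : Matrix k k ℂ)) *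
          (star (hE.eigenvectorUnitary : Matrix k k ℂ) *
          (hDh.eigenvectorUnitary : Matrix k k ℂ))
        = star (hDh.eigenvectorUnitary : Matrix k k ℂ) *
            ((hE.eigenvectorUnitary : Matrix k k ℂ) *
              star (hE.eigenvectorUnitary : Matrix k k ℂ)) *
            (hDh.eigenvectorUnitary : Matrix k k ℂ) := by
          simp only [Matrix.star_mul, star_star, Matrix.mul_assoc]
    _ = 1 := by rw [u_mul_star hV, Matrix.mul_one, u_star_mul hU]
  -- the transition weights
  set r : k → k → ℝ := fun j i => Complex.normSq
    ((star (hE.eigenvectorUnitary : Matrix k k ℂ) *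
      (hDh.eigenvectorUnitary : Matrix k k ℂ)) j i) with hrdef
  have hrnn : ∀ j i, 0 ≤ r j i := fun j i => Complex.normSq_nonneg _
  have hcol : ∀ i, ∑ j, r j i = 1 := fun i => col_normSq_sum_one hWu i
  have hrow : ∀ j, ∑ i, r j i = 1 := fun j => row_normSq_sum_one hWu j
  have hp1 : ∑ i, hDh.eigenvalues i = 1 := sum_eig_eq_one hDh hTD
  have hq1 : ∑ j, hE.eigenvalues j = 1 := sum_eig_eq_one hE hTE
  have hpnn : ∀ i, 0 ≤ hDh.eigenvalues i := fun i => hD.eigenvalues_nonneg i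
  -- second trace
  have htr2 : ((D * matLog E).trace).re
      = ∑ j, ∑ i, hDh.eigenvalues i * Real.log (hE.eigenvalues j) * r j i := by
    have h1 : ((hDh.eigenvectorUnitary : Matrix k k ℂ) *
        Matrix.diagonal (fun i => (hDh.eigenvalues i : ℂ)) *
        star (hDh.eigenvectorUnitary : Matrix k k ℂ)) *
        ((hE.eigenvectorUnitary : Matrix k k ℂ) *
        Matrix.diagonal (fun j => (Real.log (hE.eigenvalues j) : ℂ)) *
        star (hE.eigenvectorUnitary : Matrix k k ℂ)) = D * matLog E := by
      rw [← spectral_coe hDh, ← matLog_spectral hE]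
    rw [← h1, trace_conj_diag_mul_conj_diag hU hV]
    rw [Complex.re_sum]
    refine Finset.sum_congr rfl fun j _ => ?_
    rw [Complex.re_sum]
    refine Finset.sum_congr rfl fun i _ => ?_
    set w : ℂ := (star (hE.eigenvectorUnitary : Matrix k k ℂ) *
      (hDh.eigenvectorUnitary : Matrix k k ℂ)) j i with hwdef
    have : w * star w = ((r j i : ℝ) : ℂ) := by
      rw [hrdef, show star w = (starRingEnd ℂ) w from rfl, Complex.mul_conj, hwdef]
    rw [this, ← Complex.ofReal_mul, ← Complex.ofReal_mul, Complex.ofReal_re]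
  have htr1 : ((D * matLog D).trace).re
      = ∑ i, hDh.eigenvalues i * Real.log (hDh.eigenvalues i) := by
    rw [trace_mul_matLog_self hDh, Complex.ofReal_re]
  have hexp : relEntropy D E
      = (∑ i, hDh.eigenvalues i * Real.log (hDh.eigenvalues i))
        - ∑ j, ∑ i, hDh.eigenvalues i * Real.log (hE.eigenvalues j) * r j i := by
    rw [relEntropy, Matrix.mul_sub, Matrix.trace_sub, Complex.sub_re, htr1, htr2]
  rw [hexp]
  have lhs_eq : (∑ i, hDh.eigenvalues i * Real.log (hDh.eigenvalues i))
        - ∑ j, ∑ i, hDh.eigenvalues i * Real.log (hE.eigenvalues j) * r j i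
      = ∑ j, ∑ i, r j i * (hDh.eigenvalues i * Real.log (hDh.eigenvalues i)
          - hDh.eigenvalues i * Real.log (hE.eigenvalues j)) := by
    simp only [mul_sub, Finset.sum_sub_distrib]
    congr 1
    · rw [Finset.sum_comm]
      refine (Finset.sum_congr rfl fun i _ => ?_).symm
      rw [← Finset.sum_mul, hcol i, one_mul]
    · refine Finset.sum_congr rfl fun j _ => Finset.sum_congr rfl fun i _ => by ring
  rw [lhs_eq]
  have low : ∑ j, ∑ i, r j i * (hDh.eigenvalues i - hE.eigenvalues j)
      ≤ ∑ j, ∑ i, r j i * (hDh.eigenvalues i * Real.log (hDh.eigenvalues i)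
          - hDh.eigenvalues i * Real.log (hE.eigenvalues j)) := by
    refine Finset.sum_le_sum fun j _ => Finset.sum_le_sum fun i _ => ?_
    exact mul_le_mul_of_nonneg_left (scalar_klein (hpnn i) (hq j)) (hrnn j i)
  refine le_trans (le_of_eq ?_) low
  simp only [mul_sub, Finset.sum_sub_distrib]
  have e1 : ∑ j, ∑ i, r j i * hDh.eigenvalues i = 1 := by
    rw [Finset.sum_comm]
    calc ∑ i, ∑ j, r j i * hDh.eigenvalues i
        = ∑ i, hDh.eigenvalues i := by
          refine Finset.sum_congr rfl fun i _ => ?_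
          rw [← Finset.sum_mul, hcol i, one_mul]
      _ = 1 := hp1
  have e2 : ∑ j, ∑ i, r j i * hE.eigenvalues j = 1 := by
    calc ∑ j, ∑ i, r j i * hE.eigenvalues j
        = ∑ j, hE.eigenvalues j := by
          refine Finset.sum_congr rfl fun j _ => ?_
          rw [← Finset.sum_mul, hrow j, one_mul]
      _ = 1 := hq1
  rw [e1, e2, sub_self]

lemma conj_entry_le_opNorm (H : Matrix k k ℂ) {U : Matrix k k ℂ}
    (hU : U ∈ Matrix.unitaryGroup k ℂ) (i : k) :
    ‖(star U * H * U) i i‖ ≤ opNorm H := by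
  set x : EuclideanSpace ℂ k := (WithLp.equiv 2 (k → ℂ)).symm (fun j => U j i) with hx
  have hnx : ‖x‖ ^ 2 = 1 := by
    have h1 : (star U * U) i i = 1 := by rw [u_star_mul hU]; simp
    rw [Matrix.mul_apply] at h1
    simp only [Matrix.star_apply] at h1
    have h2 := congrArg Complex.re h1
    rw [Complex.re_sum] at h2
    have h3 : ∀ j, (star (U j i) * U j i).re = ‖U j i‖ ^ 2 := fun j => by
      rw [show star (U j i) = (starRingEnd ℂ) (U j i) from rfl, mul_comm, Complex.mul_conj,
        Complex.ofReal_re, Complex.normSq_eq_norm_sq]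
    rw [EuclideanSpace.norm_eq]
    rw [Real.sq_sqrt (by positivity)]
    rw [Complex.one_re] at h2
    have h4 : ∀ j, ‖x j‖ ^ 2 = (star (U j i) * U j i).re := fun j => by
      rw [show x j = U j i from rfl, h3 j]
    rw [Finset.sum_congr rfl fun j _ => h4 j, h2]
  have hTx : (Matrix.toEuclideanCLM (𝕜 := ℂ) H) x
      = (WithLp.equiv 2 (k → ℂ)).symm (H *ᵥ (fun j => U j i)) := by
    rw [hx]; rfl
  have hinner : (inner ℂ x ((Matrix.toEuclideanCLM (𝕜 := ℂ) H) x) : ℂ)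
      = (star U * H * U) i i := by
    rw [hTx, EuclideanSpace.inner_eq_star_dotProduct]
    show (H *ᵥ fun j => U j i) ⬝ᵥ star (fun j => U j i) = _
    simp only [Matrix.mul_apply, Matrix.mulVec, dotProduct, Pi.star_apply,
      Matrix.star_apply, Finset.sum_mul, Finset.mul_sum]
    rw [Finset.sum_comm]
    refine Finset.sum_congr rfl fun a _ => Finset.sum_congr rfl fun b _ => by ring
  calc ‖(star U * H * U) i i‖
      = ‖(inner ℂ x ((Matrix.toEuclideanCLM (𝕜 := ℂ) H) x) : ℂ)‖ := by rw [hinner]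
    _ ≤ ‖x‖ * ‖(Matrix.toEuclideanCLM (𝕜 := ℂ) H) x‖ := norm_inner_le_norm _ _
    _ ≤ ‖x‖ * (opNorm H * ‖x‖) := by
        refine mul_le_mul_of_nonneg_left ?_ (norm_nonneg x)
        exact ContinuousLinearMap.le_opNorm _ x
    _ = opNorm H * ‖x‖ ^ 2 := by ring
    _ = opNorm H := by rw [hnx, mul_one]

lemma abs_re_trace_mul_le (H : Matrix k k ℂ) {D : Matrix k k ℂ}
    (hD : D.PosSemidef) (hTD : D.trace = 1) :
    |((H * D).trace).re| ≤ opNorm H := by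
  have hDh : D.IsHermitian := hD.1
  have hU := eigUnitary_mem hDh
  have h1 : (H * D).trace
      = ∑ i, (star (hDh.eigenvectorUnitary : Matrix k k ℂ) * H *
          (hDh.eigenvectorUnitary : Matrix k k ℂ)) i i * (hDh.eigenvalues i : ℂ) := by
    have h2 : H * D = H * ((hDh.eigenvectorUnitary : Matrix k k ℂ) *
        Matrix.diagonal (fun i => (hDh.eigenvalues i : ℂ)) *
        star (hDh.eigenvectorUnitary : Matrix k k ℂ)) := by rw [← spectral_coe hDh]
    rw [h2]
    have h3 : H * ((hDh.eigenvectorUnitary : Matrix k k ℂ) *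
        Matrix.diagonal (fun i => (hDh.eigenvalues i : ℂ)) *
        star (hDh.eigenvectorUnitary : Matrix k k ℂ))
        = (H * (hDh.eigenvectorUnitary : Matrix k k ℂ) *
          Matrix.diagonal (fun i => (hDh.eigenvalues i : ℂ))) *
          star (hDh.eigenvectorUnitary : Matrix k k ℂ) := by
      simp only [Matrix.mul_assoc]
    rw [h3, Matrix.trace_mul_comm]
    have h4 : star (hDh.eigenvectorUnitary : Matrix k k ℂ) *
        (H * (hDh.eigenvectorUnitary : Matrix k k ℂ) *
          Matrix.diagonal (fun i => (hDh.eigenvalues i : ℂ)))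
        = (star (hDh.eigenvectorUnitary : Matrix k k ℂ) * H *
            (hDh.eigenvectorUnitary : Matrix k k ℂ)) *
          Matrix.diagonal (fun i => (hDh.eigenvalues i : ℂ)) := by
      simp only [Matrix.mul_assoc]
    rw [h4]
    simp [Matrix.trace, Matrix.diag, Matrix.mul_diagonal]
  rw [h1, Complex.re_sum]
  have hpnn : ∀ i, 0 ≤ hDh.eigenvalues i := fun i => hD.eigenvalues_nonneg i
  have hp1 : ∑ i, hDh.eigenvalues i = 1 := sum_eig_eq_one hDh hTD
  calc |∑ i, ((star (hDh.eigenvectorUnitary : Matrix k k ℂ) * H *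
          (hDh.eigenvectorUnitary : Matrix k k ℂ)) i i * (hDh.eigenvalues i : ℂ)).re|
      ≤ ∑ i, |((star (hDh.eigenvectorUnitary : Matrix k k ℂ) * H *
          (hDh.eigenvectorUnitary : Matrix k k ℂ)) i i * (hDh.eigenvalues i : ℂ)).re| :=
        Finset.abs_sum_le_sum_abs _ _
    _ ≤ ∑ i, opNorm H * hDh.eigenvalues i := by
        refine Finset.sum_le_sum fun i _ => ?_
        have e1 : ((star (hDh.eigenvectorUnitary : Matrix k k ℂ) * H *
            (hDh.eigenvectorUnitary : Matrix k k ℂ)) i i * (hDh.eigenvalues i : ℂ)).re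
            = ((star (hDh.eigenvectorUnitary : Matrix k k ℂ) * H *
            (hDh.eigenvectorUnitary : Matrix k k ℂ)) i i).re * hDh.eigenvalues i := by
          rw [Complex.mul_re]
          simp
        rw [e1, abs_mul, abs_of_nonneg (hpnn i)]
        refine mul_le_mul_of_nonneg_right ?_ (hpnn i)
        refine le_trans (Complex.abs_re_le_norm _) ?_
        exact conj_entry_le_opNorm H hU i
    _ = opNorm H := by rw [← Finset.mul_sum, hp1, mul_one]

lemma vnEntropy_zero : vnEntropy (0 : Matrix k k ℂ) = 0 := by
  have h0 : (0 : Matrix k k ℂ).IsHermitian := Matrix.isHermitian_zero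
  rw [vnEntropy, dif_pos h0]
  refine Finset.sum_eq_zero fun i _ => ?_
  have := h0.eigenvalues_eq i
  rw [Matrix.zero_mulVec, dotProduct_zero, map_zero] at this
  rw [this, Real.negMulLog_zero]

lemma posSemidef_conj_diag {V : Matrix k k ℂ} (c : k → ℝ) (hc : ∀ i, 0 ≤ c i) :
    (V * Matrix.diagonal (fun i => (c i : ℂ)) * star V).PosSemidef := by
  have hd : (Matrix.diagonal (fun i => (c i : ℂ))).PosSemidef :=
    Matrix.posSemidef_diagonal_iff.mpr fun i => by exact_mod_cast hc i
  have h2 := hd.mul_mul_conjTranspose_same V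
  rwa [← Matrix.star_eq_conjTranspose] at h2

end Helpers

section Bipartite

variable {k₁ k₂ : Type*} [Fintype k₁] [Fintype k₂] [DecidableEq k₁] [DecidableEq k₂]

lemma kron_conjTranspose (A : Matrix k₁ k₁ ℂ) (B : Matrix k₂ k₂ ℂ) :
    (A ⊗ₖ B)ᴴ = Aᴴ ⊗ₖ Bᴴ := by
  ext ⟨i, s⟩ ⟨j, t⟩
  simp [Matrix.conjTranspose_apply, Matrix.kroneckerMap_apply, star_mul']

lemma kron_unitary {A : Matrix k₁ k₁ ℂ} {B : Matrix k₂ k₂ ℂ}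
    (hA : A ∈ Matrix.unitaryGroup k₁ ℂ) (hB : B ∈ Matrix.unitaryGroup k₂ ℂ) :
    A ⊗ₖ B ∈ Matrix.unitaryGroup (k₁ × k₂) ℂ := by
  rw [Matrix.mem_unitaryGroup_iff] at hA hB
  rw [Matrix.mem_unitaryGroup_iff, Matrix.star_eq_conjTranspose, kron_conjTranspose,
    ← Matrix.mul_kronecker_mul, ← Matrix.star_eq_conjTranspose A,
    ← Matrix.star_eq_conjTranspose B, hA, hB]
  exact Matrix.one_kronecker_one

lemma kron_posSemidef {A : Matrix k₁ k₁ ℂ} {B : Matrix k₂ k₂ ℂ}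
    (hA : A.PosSemidef) (hB : B.PosSemidef) : (A ⊗ₖ B).PosSemidef := by
  exact hA.kronecker hB

lemma trace_ptraceR (D : Matrix (k₁ × k₂) (k₁ × k₂) ℂ) :
    (ptraceR D).trace = D.trace := by
  simp [ptraceR, Matrix.trace, Matrix.diag, Fintype.sum_prod_type]

lemma trace_ptraceL (D : Matrix (k₁ × k₂) (k₁ × k₂) ℂ) :
    (ptraceL D).trace = D.trace := by
  rw [Matrix.trace, Matrix.trace]
  rw [Fintype.sum_prod_type]
  rw [Finset.sum_comm]
  simp [ptraceL, Matrix.diag]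

lemma ptraceR_kron (X : Matrix k₁ k₁ ℂ) (Y : Matrix k₂ k₂ ℂ) :
    ptraceR (X ⊗ₖ Y) = Y.trace • X := by
  ext i j
  simp only [ptraceR, Matrix.of_apply, Matrix.kroneckerMap_apply, Matrix.smul_apply,
    Matrix.trace, Matrix.diag, smul_eq_mul]
  rw [← Finset.mul_sum, mul_comm]

lemma ptraceL_kron (X : Matrix k₁ k₁ ℂ) (Y : Matrix k₂ k₂ ℂ) :
    ptraceL (X ⊗ₖ Y) = X.trace • Y := by
  ext i j
  simp only [ptraceL, Matrix.of_apply, Matrix.kroneckerMap_apply, Matrix.smul_apply,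
    Matrix.trace, Matrix.diag, smul_eq_mul]
  rw [← Finset.sum_mul]

lemma ptraceR_isHermitian {D : Matrix (k₁ × k₂) (k₁ × k₂) ℂ} (hD : D.IsHermitian) :
    (ptraceR D).IsHermitian := by
  ext i j
  rw [Matrix.conjTranspose_apply]
  show star (ptraceR D j i) = ptraceR D i j
  rw [ptraceR, Matrix.of_apply, Matrix.of_apply, star_sum]
  refine Finset.sum_congr rfl fun s _ => ?_
  rw [← Matrix.conjTranspose_apply, hD]

lemma ptraceL_isHermitian {D : Matrix (k₁ × k₂) (k₁ × k₂) ℂ} (hD : D.IsHermitian) :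
    (ptraceL D).IsHermitian := by
  ext i j
  rw [Matrix.conjTranspose_apply]
  show star (ptraceL D j i) = ptraceL D i j
  rw [ptraceL, Matrix.of_apply, Matrix.of_apply, star_sum]
  refine Finset.sum_congr rfl fun s _ => ?_
  rw [← Matrix.conjTranspose_apply, hD]

lemma ptraceR_posSemidef {D : Matrix (k₁ × k₂) (k₁ × k₂) ℂ} (hD : D.PosSemidef) :
    (ptraceR D).PosSemidef := by
  refine Matrix.PosSemidef.of_dotProduct_mulVec_nonneg (ptraceR_isHermitian hD.1) fun x => ?_
  have hys : ∀ s : k₂,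
      (star (fun p : k₁ × k₂ => if p.2 = s then x p.1 else 0)) ⬝ᵥ
        (D *ᵥ (fun p : k₁ × k₂ => if p.2 = s then x p.1 else 0))
      = ∑ i, ∑ j, star (x i) * D (i, s) (j, s) * x j := by
    intro s
    rw [dotProduct, Fintype.sum_prod_type]
    refine Finset.sum_congr rfl fun i _ => ?_
    rw [Finset.sum_eq_single s (fun t _ ht => by simp [ht])
      (fun h => absurd (Finset.mem_univ s) h)]
    have hmv : (D *ᵥ (fun p : k₁ × k₂ => if p.2 = s then x p.1 else 0)) (i, s)
        = ∑ j, D (i, s) (j, s) * x j := by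
      simp only [Matrix.mulVec, dotProduct]
      rw [Fintype.sum_prod_type]
      refine Finset.sum_congr rfl fun j _ => ?_
      rw [Finset.sum_eq_single s (fun t _ ht => by simp [ht])
        (fun h => absurd (Finset.mem_univ s) h)]
      simp
    rw [hmv, Pi.star_apply]
    simp only [eq_self_iff_true, if_true]
    rw [Finset.mul_sum]
    exact Finset.sum_congr rfl fun j _ => by ring
  have lhs_eq : star x ⬝ᵥ (ptraceR D) *ᵥ x
      = ∑ s : k₂, ∑ i, ∑ j, star (x i) * D (i, s) (j, s) * x j := by
    rw [dotProduct]
    have e1 : ∀ i, star x i * ((ptraceR D) *ᵥ x) i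
        = ∑ s, ∑ j, star (x i) * D (i, s) (j, s) * x j := by
      intro i
      simp only [Matrix.mulVec, dotProduct, Pi.star_apply]
      calc star (x i) * ∑ j, ptraceR D i j * x j
          = ∑ j, ∑ s, star (x i) * D (i, s) (j, s) * x j := by
            rw [Finset.mul_sum]
            refine Finset.sum_congr rfl fun j _ => ?_
            rw [show ptraceR D i j = ∑ s, D (i, s) (j, s) from rfl, Finset.sum_mul,
              Finset.mul_sum]
            exact Finset.sum_congr rfl fun s _ => by ring
        _ = ∑ s, ∑ j, star (x i) * D (i, s) (j, s) * x j := Finset.sum_comm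
    rw [Finset.sum_congr rfl fun i _ => e1 i, Finset.sum_comm]
  rw [lhs_eq]
  refine Finset.sum_nonneg fun s _ => ?_
  have h2 := hD.dotProduct_mulVec_nonneg (fun p : k₁ × k₂ => if p.2 = s then x p.1 else 0)
  rwa [hys s] at h2

lemma ptraceL_posSemidef {D : Matrix (k₁ × k₂) (k₁ × k₂) ℂ} (hD : D.PosSemidef) :
    (ptraceL D).PosSemidef := by
  refine Matrix.PosSemidef.of_dotProduct_mulVec_nonneg (ptraceL_isHermitian hD.1) fun x => ?_
  have hys : ∀ s : k₁,
      (star (fun p : k₁ × k₂ => if p.1 = s then x p.2 else 0)) ⬝ᵥ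
        (D *ᵥ (fun p : k₁ × k₂ => if p.1 = s then x p.2 else 0))
      = ∑ i, ∑ j, star (x i) * D (s, i) (s, j) * x j := by
    intro s
    rw [dotProduct, Fintype.sum_prod_type]
    rw [Finset.sum_eq_single s (fun t _ ht => by simp [ht])
      (fun h => absurd (Finset.mem_univ s) h)]
    refine Finset.sum_congr rfl fun i _ => ?_
    have hmv : (D *ᵥ (fun p : k₁ × k₂ => if p.1 = s then x p.2 else 0)) (s, i)
        = ∑ j, D (s, i) (s, j) * x j := by
      simp only [Matrix.mulVec, dotProduct]
      rw [Fintype.sum_prod_type]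
      rw [Finset.sum_eq_single s (fun t _ ht => by simp [ht])
        (fun h => absurd (Finset.mem_univ s) h)]
      simp
    rw [hmv, Pi.star_apply]
    simp only [eq_self_iff_true, if_true]
    rw [Finset.mul_sum]
    exact Finset.sum_congr rfl fun j _ => by ring
  have lhs_eq : star x ⬝ᵥ (ptraceL D) *ᵥ x
      = ∑ s : k₁, ∑ i, ∑ j, star (x i) * D (s, i) (s, j) * x j := by
    rw [dotProduct]
    have e1 : ∀ i, star x i * ((ptraceL D) *ᵥ x) i
        = ∑ s, ∑ j, star (x i) * D (s, i) (s, j) * x j := by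
      intro i
      simp only [Matrix.mulVec, dotProduct, Pi.star_apply]
      calc star (x i) * ∑ j, ptraceL D i j * x j
          = ∑ j, ∑ s, star (x i) * D (s, i) (s, j) * x j := by
            rw [Finset.mul_sum]
            refine Finset.sum_congr rfl fun j _ => ?_
            rw [show ptraceL D i j = ∑ s, D (s, i) (s, j) from rfl, Finset.sum_mul,
              Finset.mul_sum]
            exact Finset.sum_congr rfl fun s _ => by ring
        _ = ∑ s, ∑ j, star (x i) * D (s, i) (s, j) * x j := Finset.sum_comm
    rw [Finset.sum_congr rfl fun i _ => e1 i, Finset.sum_comm]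
  rw [lhs_eq]
  refine Finset.sum_nonneg fun s _ => ?_
  have h2 := hD.dotProduct_mulVec_nonneg (fun p : k₁ × k₂ => if p.1 = s then x p.2 else 0)
  rwa [hys s] at h2

lemma trace_kron_one_mul (X : Matrix k₁ k₁ ℂ) (D : Matrix (k₁ × k₂) (k₁ × k₂) ℂ) :
    ((X ⊗ₖ (1 : Matrix k₂ k₂ ℂ)) * D).trace = (X * ptraceR D).trace := by
  have e1 : ∀ (i : k₁) (s : k₂), ((X ⊗ₖ (1 : Matrix k₂ k₂ ℂ)) * D) (i, s) (i, s)
      = ∑ j, X i j * D (j, s) (i, s) := by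
    intro i s
    rw [Matrix.mul_apply, Fintype.sum_prod_type]
    refine Finset.sum_congr rfl fun j _ => ?_
    rw [Finset.sum_eq_single s
      (fun t _ ht => by simp [Matrix.one_apply, Ne.symm ht])
      (fun h => absurd (Finset.mem_univ s) h)]
    simp [Matrix.one_apply]
  simp only [Matrix.trace, Matrix.diag]
  rw [Fintype.sum_prod_type]
  calc ∑ i, ∑ s, ((X ⊗ₖ (1 : Matrix k₂ k₂ ℂ)) * D) (i, s) (i, s)
      = ∑ i, ∑ s, ∑ j, X i j * D (j, s) (i, s) :=
        Finset.sum_congr rfl fun i _ => Finset.sum_congr rfl fun s _ => e1 i s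
    _ = ∑ i, ∑ j, ∑ s, X i j * D (j, s) (i, s) :=
        Finset.sum_congr rfl fun i _ => Finset.sum_comm
    _ = ∑ i, (X * ptraceR D) i i := by
        refine Finset.sum_congr rfl fun i _ => ?_
        rw [Matrix.mul_apply]
        refine Finset.sum_congr rfl fun j _ => ?_
        rw [show ptraceR D j i = ∑ s, D (j, s) (i, s) from rfl, Finset.mul_sum]

lemma trace_one_kron_mul (Y : Matrix k₂ k₂ ℂ) (D : Matrix (k₁ × k₂) (k₁ × k₂) ℂ) :
    (((1 : Matrix k₁ k₁ ℂ) ⊗ₖ Y) * D).trace = (Y * ptraceL D).trace := by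
  have e1 : ∀ (i : k₁) (s : k₂), (((1 : Matrix k₁ k₁ ℂ) ⊗ₖ Y) * D) (i, s) (i, s)
      = ∑ t, Y s t * D (i, t) (i, s) := by
    intro i s
    rw [Matrix.mul_apply, Fintype.sum_prod_type]
    rw [Finset.sum_eq_single i
      (fun j _ hj => by simp [Matrix.one_apply, Ne.symm hj])
      (fun h => absurd (Finset.mem_univ i) h)]
    refine Finset.sum_congr rfl fun t _ => ?_
    simp [Matrix.one_apply]
  simp only [Matrix.trace, Matrix.diag]
  rw [Fintype.sum_prod_type]
  calc ∑ i, ∑ s, (((1 : Matrix k₁ k₁ ℂ) ⊗ₖ Y) * D) (i, s) (i, s)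
      = ∑ i, ∑ s, ∑ t, Y s t * D (i, t) (i, s) :=
        Finset.sum_congr rfl fun i _ => Finset.sum_congr rfl fun s _ => e1 i s
    _ = ∑ s, ∑ i, ∑ t, Y s t * D (i, t) (i, s) := Finset.sum_comm
    _ = ∑ s, ∑ t, ∑ i, Y s t * D (i, t) (i, s) :=
        Finset.sum_congr rfl fun s _ => Finset.sum_comm
    _ = ∑ s, (Y * ptraceL D) s s := by
        refine Finset.sum_congr rfl fun s _ => ?_
        rw [Matrix.mul_apply]
        refine Finset.sum_congr rfl fun t _ => ?_
        rw [show ptraceL D t s = ∑ i, D (i, t) (i, s) from rfl, Finset.mul_sum]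

end Bipartite



section Gibbs
variable {k : Type*} [Fintype k] [DecidableEq k]

lemma isUnit_unitary {V : Matrix k k ℂ} (hV : V ∈ Matrix.unitaryGroup k ℂ) : IsUnit V :=
  ⟨⟨V, star V, u_mul_star hV, u_star_mul hV⟩, rfl⟩

lemma inv_unitary {V : Matrix k k ℂ} (hV : V ∈ Matrix.unitaryGroup k ℂ) : V⁻¹ = star V :=
  Matrix.inv_eq_right_inv (u_mul_star hV)

lemma smul_conj_diag (c : ℂ) (V : Matrix k k ℂ) (v : k → ℂ) :
    c • (V * Matrix.diagonal v * star V)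
      = V * Matrix.diagonal (fun i => c * v i) * star V := by
  rw [← Matrix.smul_mul, ← Matrix.mul_smul, ← Matrix.diagonal_smul]
  rfl

lemma conj_const_diag {V : Matrix k k ℂ} (hV : V ∈ Matrix.unitaryGroup k ℂ) (c : ℂ) :
    V * Matrix.diagonal (fun _ : k => c) * star V = c • (1 : Matrix k k ℂ) := by
  have h1 : Matrix.diagonal (fun _ : k => c) = c • (1 : Matrix k k ℂ) := by
    ext i j
    by_cases h : i = j <;>
      simp [Matrix.diagonal_apply, Matrix.one_apply, h]
  rw [h1, Matrix.mul_smul, Matrix.mul_one, Matrix.smul_mul, u_mul_star hV]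

lemma neg_smul_spectral {H : Matrix k k ℂ} (hH : H.IsHermitian) (β : ℝ) :
    (hH.eigenvectorUnitary : Matrix k k ℂ) *
      Matrix.diagonal (fun i => ((-β * hH.eigenvalues i : ℝ) : ℂ)) *
        star (hH.eigenvectorUnitary : Matrix k k ℂ) = (-(β : ℂ)) • H := by
  rw [show (fun i => ((-β * hH.eigenvalues i : ℝ) : ℂ))
      = fun i => (-(β : ℂ)) * ((hH.eigenvalues i : ℝ) : ℂ) from
    funext fun i => by push_cast; ring]
  rw [← smul_conj_diag, ← spectral_coe hH]

lemma exp_neg_smul_spectral {H : Matrix k k ℂ} (hH : H.IsHermitian) (β : ℝ) :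
    NormedSpace.exp ((-(β : ℂ)) • H) = (hH.eigenvectorUnitary : Matrix k k ℂ) *
      Matrix.diagonal (fun i => ((Real.exp (-β * hH.eigenvalues i) : ℝ) : ℂ)) *
        star (hH.eigenvectorUnitary : Matrix k k ℂ) := by
  have hd : NormedSpace.exp (fun i => ((-β * hH.eigenvalues i : ℝ) : ℂ))
      = fun i => ((Real.exp (-β * hH.eigenvalues i) : ℝ) : ℂ) := by
    funext i
    rw [Pi.coe_exp, Real.exp_eq_exp_ℝ, NormedSpace.ofReal_exp_ℝ_ℝ]
  rw [← neg_smul_spectral hH β, ← inv_unitary (eigUnitary_mem hH)]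
  rw [Matrix.exp_conj _ _ (isUnit_unitary (eigUnitary_mem hH)),
    Matrix.exp_diagonal, hd, inv_unitary (eigUnitary_mem hH)]

lemma kron_isHermitian {k₁ k₂ : Type*} [Fintype k₁] [Fintype k₂]
    [DecidableEq k₁] [DecidableEq k₂]
    {A : Matrix k₁ k₁ ℂ} {B : Matrix k₂ k₂ ℂ}
    (hA : A.IsHermitian) (hB : B.IsHermitian) : (A ⊗ₖ B).IsHermitian := by
  show (A ⊗ₖ B)ᴴ = A ⊗ₖ B
  rw [kron_conjTranspose, hA, hB]

lemma kron_conj_diag {k₁ k₂ : Type*} [Fintype k₁] [Fintype k₂]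
    [DecidableEq k₁] [DecidableEq k₂]
    (VA : Matrix k₁ k₁ ℂ) (VB : Matrix k₂ k₂ ℂ) (a : k₁ → ℂ) (b : k₂ → ℂ) :
    (VA * Matrix.diagonal a * star VA) ⊗ₖ (VB * Matrix.diagonal b * star VB)
      = (VA ⊗ₖ VB) * Matrix.diagonal (fun p : k₁ × k₂ => a p.1 * b p.2) *
          star (VA ⊗ₖ VB) := by
  rw [Matrix.mul_kronecker_mul, Matrix.mul_kronecker_mul,
    Matrix.diagonal_kronecker_diagonal]
  rw [Matrix.star_eq_conjTranspose (VA ⊗ₖ VB), kron_conjTranspose,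
    ← Matrix.star_eq_conjTranspose VA, ← Matrix.star_eq_conjTranspose VB]

end Gibbs

set_option maxHeartbeats 2000000 in
/-- thermal area law, finite-dimensional form. -/
theorem thermal_area_law {m n : ℕ}
    (HA : Matrix (Fin m) (Fin m) ℂ) (hHA : HA.IsHermitian)
    (HB : Matrix (Fin n) (Fin n) ℂ) (hHB : HB.IsHermitian)
    (Hd : Matrix (Fin m × Fin n) (Fin m × Fin n) ℂ) (hHd : Hd.IsHermitian)
    (β : ℝ) (hβ : 0 < β)
    (HAB : Matrix (Fin m × Fin n) (Fin m × Fin n) ℂ)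
    (hHAB : HAB = HA ⊗ₖ (1 : Matrix (Fin n) (Fin n) ℂ) + Hd
      + (1 : Matrix (Fin m) (Fin m) ℂ) ⊗ₖ HB)
    (ρ : Matrix (Fin m × Fin n) (Fin m × Fin n) ℂ) (hρ : ρ = gibbs β HAB) :
    mutualEntropy ρ ≤ β * ((Hd * (ptraceR ρ ⊗ₖ ptraceL ρ - ρ)).trace).re ∧
    β * ((Hd * (ptraceR ρ ⊗ₖ ptraceL ρ - ρ)).trace).re ≤ 2 * β * opNorm Hd := by
  by_cases hmn : 0 < m ∧ 0 < n
  · obtain ⟨hm, hn⟩ := hmn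
    haveI : Nonempty (Fin m × Fin n) := ⟨(⟨0, hm⟩, ⟨0, hn⟩)⟩
    have hH : HAB.IsHermitian := by
      rw [hHAB]
      exact ((kron_isHermitian hHA Matrix.isHermitian_one).add hHd).add
        (kron_isHermitian Matrix.isHermitian_one hHB)
    have hU := eigUnitary_mem hH
    have hZpos : 0 < ∑ i, Real.exp (-β * hH.eigenvalues i) :=
      Finset.sum_pos (fun i _ => Real.exp_pos _) Finset.univ_nonempty
    have hEtr : (NormedSpace.exp ((-(β : ℂ)) • HAB)).trace
        = ((∑ i, Real.exp (-β * hH.eigenvalues i) : ℝ) : ℂ) := by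
      rw [exp_neg_smul_spectral hH β, trace_conj_diag hU, Complex.ofReal_sum]
    have hρform : ρ = (hH.eigenvectorUnitary : Matrix (Fin m × Fin n) (Fin m × Fin n) ℂ) *
        Matrix.diagonal (fun i => (((∑ j, Real.exp (-β * hH.eigenvalues j))⁻¹ *
          Real.exp (-β * hH.eigenvalues i) : ℝ) : ℂ)) *
          star (hH.eigenvectorUnitary : Matrix (Fin m × Fin n) (Fin m × Fin n) ℂ) := by
      rw [hρ, gibbs, hEtr, exp_neg_smul_spectral hH β, ← Complex.ofReal_inv,
        smul_conj_diag]
      congr 1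
      congr 1
      funext i
      push_cast
      ring
    have hρPSD : ρ.PosSemidef := by
      rw [hρform]
      exact posSemidef_conj_diag _ (fun i => by positivity)
    have hρH : ρ.IsHermitian := hρPSD.1
    have hρtr : ρ.trace = 1 := by
      rw [hρform, trace_conj_diag hU, ← Complex.ofReal_sum, ← Finset.mul_sum,
        inv_mul_cancel₀ hZpos.ne', Complex.ofReal_one]
    have hρeigpos : ∀ i, 0 < hρH.eigenvalues i :=
      eig_pos_of_spectral hρH hU hρform (fun i => by positivity)
    have hlogρ : matLog ρ = (-(β : ℂ)) • HAB
        - ((Real.log (∑ i, Real.exp (-β * hH.eigenvalues i)) : ℝ) : ℂ) •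
            (1 : Matrix (Fin m × Fin n) (Fin m × Fin n) ℂ) := by
      have h2 := hermCalc_spectral Real.log hρH hU hρform
      rw [show matLog ρ = hermCalc Real.log ρ from rfl, h2]
      have h3 : (fun i => ((Real.log ((∑ j, Real.exp (-β * hH.eigenvalues j))⁻¹ *
          Real.exp (-β * hH.eigenvalues i)) : ℝ) : ℂ))
          = fun i => (((-β * hH.eigenvalues i : ℝ) : ℂ)
            - ((Real.log (∑ j, Real.exp (-β * hH.eigenvalues j)) : ℝ) : ℂ)) := by
        funext i
        rw [Real.log_mul (inv_ne_zero hZpos.ne') (Real.exp_pos _).ne', Real.log_inv,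
          Real.log_exp]
        push_cast
        ring
      rw [h3, ← Matrix.diagonal_sub, Matrix.mul_sub, Matrix.sub_mul,
        neg_smul_spectral hH β, conj_const_diag hU]
    have hSρ : vnEntropy ρ = β * ((HAB * ρ).trace).re
        + Real.log (∑ i, Real.exp (-β * hH.eigenvalues i)) := by
      rw [vnEntropy_eq_neg_trace hρH, hlogρ]
      rw [Matrix.mul_sub, Matrix.trace_sub, Complex.sub_re, neg_sub]
      rw [Matrix.mul_smul, Matrix.mul_smul, Matrix.mul_one,
        Matrix.trace_smul, Matrix.trace_smul, hρtr]
      rw [smul_eq_mul, smul_eq_mul, mul_one, Complex.ofReal_re]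
      rw [show (-(β : ℂ)) = ((-β : ℝ) : ℂ) from by push_cast; ring,
        Complex.re_ofReal_mul, Matrix.trace_mul_comm]
      ring
    -- reduced density matrices
    have hρAPSD : (ptraceR ρ).PosSemidef := ptraceR_posSemidef hρPSD
    have hρBPSD : (ptraceL ρ).PosSemidef := ptraceL_posSemidef hρPSD
    have hρAH : (ptraceR ρ).IsHermitian := hρAPSD.1
    have hρBH : (ptraceL ρ).IsHermitian := hρBPSD.1
    have hρAtr : (ptraceR ρ).trace = 1 := by rw [trace_ptraceR, hρtr]
    have hρBtr : (ptraceL ρ).trace = 1 := by rw [trace_ptraceL, hρtr]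
    have hσPSD : (ptraceR ρ ⊗ₖ ptraceL ρ).PosSemidef := kron_posSemidef hρAPSD hρBPSD
    have hσtr : (ptraceR ρ ⊗ₖ ptraceL ρ).trace = 1 := by
      rw [Matrix.trace_kronecker, hρAtr, hρBtr, mul_one]
    have hσU := kron_unitary (eigUnitary_mem hρAH) (eigUnitary_mem hρBH)
    have hσform : ptraceR ρ ⊗ₖ ptraceL ρ
        = ((hρAH.eigenvectorUnitary : Matrix (Fin m) (Fin m) ℂ) ⊗ₖ
            (hρBH.eigenvectorUnitary : Matrix (Fin n) (Fin n) ℂ)) *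
          Matrix.diagonal (fun p : Fin m × Fin n =>
            ((hρAH.eigenvalues p.1 * hρBH.eigenvalues p.2 : ℝ) : ℂ)) *
          star ((hρAH.eigenvectorUnitary : Matrix (Fin m) (Fin m) ℂ) ⊗ₖ
            (hρBH.eigenvectorUnitary : Matrix (Fin n) (Fin n) ℂ)) := by
      have hk := kron_conj_diag (hρAH.eigenvectorUnitary : Matrix (Fin m) (Fin m) ℂ)
        (hρBH.eigenvectorUnitary : Matrix (Fin n) (Fin n) ℂ)
        (fun i => ((hρAH.eigenvalues i : ℝ) : ℂ)) (fun j => ((hρBH.eigenvalues j : ℝ) : ℂ))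
      rw [← spectral_coe hρAH, ← spectral_coe hρBH] at hk
      rw [hk]
      congr 1
      congr 1
      funext p
      push_cast
      ring
    have hlogσ := hermCalc_spectral Real.log hσPSD.1 hσU hσform
    have hSA : vnEntropy (ptraceR ρ) = ∑ i, Real.negMulLog (hρAH.eigenvalues i) := by
      rw [vnEntropy, dif_pos hρAH]
    have hSB : vnEntropy (ptraceL ρ) = ∑ j, Real.negMulLog (hρBH.eigenvalues j) := by
      rw [vnEntropy, dif_pos hρBH]
    have hpA1 : ∑ i, hρAH.eigenvalues i = 1 := sum_eig_eq_one hρAH hρAtr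
    have hpB1 : ∑ j, hρBH.eigenvalues j = 1 := sum_eig_eq_one hρBH hρBtr
    have hprod : ∑ p : Fin m × Fin n,
        ((hρAH.eigenvalues p.1 * hρBH.eigenvalues p.2) *
          Real.log (hρAH.eigenvalues p.1 * hρBH.eigenvalues p.2))
        = -(vnEntropy (ptraceR ρ) + vnEntropy (ptraceL ρ)) := by
      have e0 : ∀ p : Fin m × Fin n,
          (hρAH.eigenvalues p.1 * hρBH.eigenvalues p.2) *
            Real.log (hρAH.eigenvalues p.1 * hρBH.eigenvalues p.2)
          = -Real.negMulLog (hρAH.eigenvalues p.1 * hρBH.eigenvalues p.2) := fun p => by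
        rw [Real.negMulLog]
        ring
      rw [Finset.sum_congr rfl fun p _ => e0 p, Finset.sum_neg_distrib,
        Fintype.sum_prod_type]
      have e1 : ∑ i, ∑ j, Real.negMulLog (hρAH.eigenvalues i * hρBH.eigenvalues j)
          = vnEntropy (ptraceR ρ) + vnEntropy (ptraceL ρ) := by
        calc ∑ i, ∑ j, Real.negMulLog (hρAH.eigenvalues i * hρBH.eigenvalues j)
            = ∑ i, ∑ j, (hρBH.eigenvalues j * Real.negMulLog (hρAH.eigenvalues i)
                + hρAH.eigenvalues i * Real.negMulLog (hρBH.eigenvalues j)) :=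
              Finset.sum_congr rfl fun i _ => Finset.sum_congr rfl fun j _ =>
                Real.negMulLog_mul _ _
          _ = ∑ i, ((∑ j, hρBH.eigenvalues j) * Real.negMulLog (hρAH.eigenvalues i)
                + hρAH.eigenvalues i * ∑ j, Real.negMulLog (hρBH.eigenvalues j)) := by
              refine Finset.sum_congr rfl fun i _ => ?_
              rw [Finset.sum_add_distrib, ← Finset.sum_mul, ← Finset.mul_sum]
          _ = ∑ i, (Real.negMulLog (hρAH.eigenvalues i)
                + hρAH.eigenvalues i * ∑ j, Real.negMulLog (hρBH.eigenvalues j)) := by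
              rw [hpB1]
              simp only [one_mul]
          _ = (∑ i, Real.negMulLog (hρAH.eigenvalues i))
                + (∑ i, hρAH.eigenvalues i) * ∑ j, Real.negMulLog (hρBH.eigenvalues j) := by
              rw [Finset.sum_add_distrib, ← Finset.sum_mul]
          _ = vnEntropy (ptraceR ρ) + vnEntropy (ptraceL ρ) := by
              rw [hpA1, one_mul, hSA, hSB]
      rw [e1]
    have htrσlogσ : (((ptraceR ρ ⊗ₖ ptraceL ρ) * matLog (ptraceR ρ ⊗ₖ ptraceL ρ)).trace).re
        = -(vnEntropy (ptraceR ρ) + vnEntropy (ptraceL ρ)) := by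
      have h6 : (ptraceR ρ ⊗ₖ ptraceL ρ) * matLog (ptraceR ρ ⊗ₖ ptraceL ρ)
          = (((hρAH.eigenvectorUnitary : Matrix (Fin m) (Fin m) ℂ) ⊗ₖ
              (hρBH.eigenvectorUnitary : Matrix (Fin n) (Fin n) ℂ)) *
            Matrix.diagonal (fun p : Fin m × Fin n =>
              ((hρAH.eigenvalues p.1 * hρBH.eigenvalues p.2 : ℝ) : ℂ)) *
            star ((hρAH.eigenvectorUnitary : Matrix (Fin m) (Fin m) ℂ) ⊗ₖ
              (hρBH.eigenvectorUnitary : Matrix (Fin n) (Fin n) ℂ))) *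
            (((hρAH.eigenvectorUnitary : Matrix (Fin m) (Fin m) ℂ) ⊗ₖ
              (hρBH.eigenvectorUnitary : Matrix (Fin n) (Fin n) ℂ)) *
            Matrix.diagonal (fun p : Fin m × Fin n =>
              ((Real.log (hρAH.eigenvalues p.1 * hρBH.eigenvalues p.2) : ℝ) : ℂ)) *
            star ((hρAH.eigenvectorUnitary : Matrix (Fin m) (Fin m) ℂ) ⊗ₖ
              (hρBH.eigenvectorUnitary : Matrix (Fin n) (Fin n) ℂ))) := by
        rw [show matLog (ptraceR ρ ⊗ₖ ptraceL ρ)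
            = hermCalc Real.log (ptraceR ρ ⊗ₖ ptraceL ρ) from rfl, hlogσ]
        conv_lhs => rw [hσform]
      rw [h6, trace_conj_diag_mul hσU]
      have h7 : ∀ p : Fin m × Fin n,
          ((hρAH.eigenvalues p.1 * hρBH.eigenvalues p.2 : ℝ) : ℂ) *
            ((Real.log (hρAH.eigenvalues p.1 * hρBH.eigenvalues p.2) : ℝ) : ℂ)
          = (((hρAH.eigenvalues p.1 * hρBH.eigenvalues p.2) *
              Real.log (hρAH.eigenvalues p.1 * hρBH.eigenvalues p.2) : ℝ) : ℂ) := fun p => by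
        push_cast
        ring
      rw [Finset.sum_congr rfl fun p _ => h7 p, ← Complex.ofReal_sum, Complex.ofReal_re,
        hprod]
    have htrσlogρ : (((ptraceR ρ ⊗ₖ ptraceL ρ) * matLog ρ).trace).re
        = -β * ((HAB * (ptraceR ρ ⊗ₖ ptraceL ρ)).trace).re
          - Real.log (∑ i, Real.exp (-β * hH.eigenvalues i)) := by
      rw [hlogρ]
      rw [Matrix.mul_sub, Matrix.trace_sub, Complex.sub_re]
      rw [Matrix.mul_smul, Matrix.mul_smul, Matrix.mul_one,
        Matrix.trace_smul, Matrix.trace_smul, hσtr]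
      rw [smul_eq_mul, smul_eq_mul, mul_one, Complex.ofReal_re]
      rw [show (-(β : ℂ)) = ((-β : ℝ) : ℂ) from by push_cast; ring,
        Complex.re_ofReal_mul, Matrix.trace_mul_comm]
    have hrelval : relEntropy (ptraceR ρ ⊗ₖ ptraceL ρ) ρ
        = -(vnEntropy (ptraceR ρ) + vnEntropy (ptraceL ρ))
          + β * ((HAB * (ptraceR ρ ⊗ₖ ptraceL ρ)).trace).re
          + Real.log (∑ i, Real.exp (-β * hH.eigenvalues i)) := by
      rw [relEntropy, Matrix.mul_sub, Matrix.trace_sub, Complex.sub_re,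
        htrσlogσ, htrσlogρ]
      ring
    have hrel : 0 ≤ relEntropy (ptraceR ρ ⊗ₖ ptraceL ρ) ρ :=
      klein hσPSD hρH hρeigpos hσtr hρtr
    have hcA : ((HA ⊗ₖ (1 : Matrix (Fin n) (Fin n) ℂ)) * (ptraceR ρ ⊗ₖ ptraceL ρ)).trace
        = ((HA ⊗ₖ (1 : Matrix (Fin n) (Fin n) ℂ)) * ρ).trace := by
      rw [trace_kron_one_mul, trace_kron_one_mul, ptraceR_kron, hρBtr, one_smul]
    have hcB : (((1 : Matrix (Fin m) (Fin m) ℂ) ⊗ₖ HB) * (ptraceR ρ ⊗ₖ ptraceL ρ)).trace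
        = (((1 : Matrix (Fin m) (Fin m) ℂ) ⊗ₖ HB) * ρ).trace := by
      rw [trace_one_kron_mul, trace_one_kron_mul, ptraceL_kron, hρAtr, one_smul]
    have hsplit : ∀ X : Matrix (Fin m × Fin n) (Fin m × Fin n) ℂ,
        (HAB * X).trace = ((HA ⊗ₖ (1 : Matrix (Fin n) (Fin n) ℂ)) * X).trace
          + (Hd * X).trace + (((1 : Matrix (Fin m) (Fin m) ℂ) ⊗ₖ HB) * X).trace := by
      intro X
      rw [hHAB, Matrix.add_mul, Matrix.add_mul, Matrix.trace_add, Matrix.trace_add]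
    have hdiff : ((HAB * (ptraceR ρ ⊗ₖ ptraceL ρ)).trace).re - ((HAB * ρ).trace).re
        = ((Hd * (ptraceR ρ ⊗ₖ ptraceL ρ)).trace).re - ((Hd * ρ).trace).re := by
      rw [hsplit (ptraceR ρ ⊗ₖ ptraceL ρ), hsplit ρ, hcA, hcB]
      simp only [Complex.add_re]
      ring
    have hGoalTr : ((Hd * (ptraceR ρ ⊗ₖ ptraceL ρ - ρ)).trace).re
        = ((Hd * (ptraceR ρ ⊗ₖ ptraceL ρ)).trace).re - ((Hd * ρ).trace).re := by
      rw [Matrix.mul_sub, Matrix.trace_sub, Complex.sub_re]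
    constructor
    · rw [mutualEntropy, hGoalTr]
      have hmulβ := congrArg (fun t => β * t) hdiff
      simp only [mul_sub] at hmulβ
      rw [mul_sub]
      linarith [hrel, hrelval, hSρ, hmulβ]
    · rw [hGoalTr]
      have h1 := abs_re_trace_mul_le Hd hσPSD hσtr
      have h2 := abs_re_trace_mul_le Hd hρPSD hρtr
      rw [abs_le] at h1 h2
      have h3 : ((Hd * (ptraceR ρ ⊗ₖ ptraceL ρ)).trace).re - ((Hd * ρ).trace).re
          ≤ 2 * opNorm Hd := by linarith [h1.2, h2.1]
      have h4 := mul_le_mul_of_nonneg_left h3 hβ.le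
      linarith
  · have hem : IsEmpty (Fin m × Fin n) := by
      constructor
      rintro ⟨a, b⟩
      rcases not_and_or.mp hmn with h | h
      · exact h (lt_of_le_of_lt (Nat.zero_le _) a.isLt)
      · exact h (lt_of_le_of_lt (Nat.zero_le _) b.isLt)
    have hρ0 : ρ = 0 := by
      ext p q
      exact (hem.false p).elim
    have hA0 : ptraceR ρ = 0 := by
      ext i j
      simp [ptraceR, hρ0]
    have hB0 : ptraceL ρ = 0 := by
      ext i j
      simp [ptraceL, hρ0]
    have hker : ptraceR ρ ⊗ₖ ptraceL ρ - ρ = 0 := by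
      rw [hA0, hρ0, Matrix.zero_kronecker, sub_zero]
    have hop : (0 : ℝ) ≤ opNorm Hd := by
      rw [opNorm]
      exact norm_nonneg _
    constructor
    · rw [mutualEntropy, hker, Matrix.mul_zero, Matrix.trace_zero, hA0, hB0, hρ0,
        vnEntropy_zero, vnEntropy_zero, vnEntropy_zero, Complex.zero_re]
      norm_num
    · rw [hker, Matrix.mul_zero, Matrix.trace_zero]
      rw [Complex.zero_re, mul_zero]
      exact mul_nonneg (mul_nonneg (by norm_num) hβ.le) hop

end TAL
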